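/- Let n be a positive integer, A an n×n real matrix, q ∈ ℝⁿ, and x⁰, z₁⁰, z₂⁰ ∈ ℝⁿ with x⁰ > 0 and y⁰ := Ax⁰ + q > 0 componentwise. Let X⁰ = diag(x⁰), Z₁⁰ = diag(z₁⁰), Z₂⁰ = diag(z₂⁰), Y⁰ = diag(y⁰), and define the 3n×3n matrix R₁⁰ = [[I, 0, 0], [Z₁⁰, X⁰, 0], [Z₂⁰A, 0, Y⁰]] and the vector R₂⁰ ∈ ℝ³ⁿ = (−[(A+Aᵗ)x⁰ + q − z₁⁰ − Aᵗz₂⁰], −Z₁⁰x⁰, −Z₂⁰(Ax⁰+q)). Then R₁⁰ is invertible, and with κ = (R₁⁰)⁻¹R₂⁰, the (3n+1)×(3n+1) block matrix [[R₁⁰, R₂⁰], [κᵗ, −1]] has strictly negative determinant; indeed this determinant equals −(∏_{i=1}^{n} x⁰ᵢ y⁰ᵢ)·(1 + ‖κ‖²). -/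

import Mathlib

open Matrix

/-- The Jacobian `∂H/∂y` of the homotopy function at the initial point `(y⁰, 1)`. -/
noncomputable def homotopyR1 (n : ℕ) (A : Matrix (Fin n) (Fin n) ℝ)
    (q x0 z10 z20 : Fin n → ℝ) :
    Matrix ((Fin n ⊕ Fin n) ⊕ Fin n) ((Fin n ⊕ Fin n) ⊕ Fin n) ℝ :=
  Matrix.fromBlocks
    (Matrix.fromBlocks (1 : Matrix (Fin n) (Fin n) ℝ) 0
      (Matrix.diagonal z10) (Matrix.diagonal x0))
    0
    (Matrix.fromCols (Matrix.diagonal z20 * A) 0)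
    (Matrix.diagonal (A.mulVec x0 + q))

/-- The column `∂H/∂λ` of the homotopy function at the initial point `(y⁰, 1)`. -/
noncomputable def homotopyR2 (n : ℕ) (A : Matrix (Fin n) (Fin n) ℝ)
    (q x0 z10 z20 : Fin n → ℝ) : ((Fin n ⊕ Fin n) ⊕ Fin n) → ℝ :=
  Sum.elim
    (Sum.elim (-((A + Aᵀ).mulVec x0 + q - z10 - Aᵀ.mulVec z20))
      (fun i => -(z10 i * x0 i)))
    (fun i => -(z20 i * (A.mulVec x0 + q) i))

lemma homotopyR1_det (n : ℕ) (A : Matrix (Fin n) (Fin n) ℝ)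
    (q x0 z10 z20 : Fin n → ℝ) :
    (homotopyR1 n A q x0 z10 z20).det = ∏ i, x0 i * (A.mulVec x0 + q) i := by
  rw [homotopyR1, Matrix.det_fromBlocks_zero₁₂, Matrix.det_fromBlocks_zero₁₂,
    Matrix.det_one, one_mul, Matrix.det_diagonal, Matrix.det_diagonal,
    ← Finset.prod_mul_distrib]

theorem positive_tangent_direction (n : ℕ) (hn : 0 < n)
    (A : Matrix (Fin n) (Fin n) ℝ) (q x0 z10 z20 : Fin n → ℝ)
    (hx0 : ∀ i, 0 < x0 i) (hy0 : ∀ i, 0 < (A.mulVec x0 + q) i) :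
    IsUnit (homotopyR1 n A q x0 z10 z20).det
    ∧ (Matrix.fromBlocks (homotopyR1 n A q x0 z10 z20)
          (Matrix.replicateCol Unit (homotopyR2 n A q x0 z10 z20))
          (Matrix.replicateRow Unit
            ((homotopyR1 n A q x0 z10 z20)⁻¹.mulVec (homotopyR2 n A q x0 z10 z20)))
          (-1 : Matrix Unit Unit ℝ)).det
        = -(∏ i, x0 i * (A.mulVec x0 + q) i)
          * (1 + ∑ j, ((homotopyR1 n A q x0 z10 z20)⁻¹.mulVec
              (homotopyR2 n A q x0 z10 z20)) j ^ 2)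
    ∧ (Matrix.fromBlocks (homotopyR1 n A q x0 z10 z20)
          (Matrix.replicateCol Unit (homotopyR2 n A q x0 z10 z20))
          (Matrix.replicateRow Unit
            ((homotopyR1 n A q x0 z10 z20)⁻¹.mulVec (homotopyR2 n A q x0 z10 z20)))
          (-1 : Matrix Unit Unit ℝ)).det < 0 := by
  set M := homotopyR1 n A q x0 z10 z20 with hM
  set v := homotopyR2 n A q x0 z10 z20 with hv
  have hdet : M.det = ∏ i, x0 i * (A.mulVec x0 + q) i := homotopyR1_det n A q x0 z10 z20
  have hpos : 0 < ∏ i, x0 i * (A.mulVec x0 + q) i :=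
    Finset.prod_pos fun i _ => mul_pos (hx0 i) (hy0 i)
  have hunit : IsUnit M.det := by rw [hdet]; exact (hpos.ne').isUnit
  have : Invertible M := M.invertibleOfIsUnitDet hunit
  set κ := M⁻¹.mulVec v with hκ
  have hbig : (Matrix.fromBlocks M (Matrix.replicateCol Unit v) (Matrix.replicateRow Unit κ)
      (-1 : Matrix Unit Unit ℝ)).det
      = -(∏ i, x0 i * (A.mulVec x0 + q) i) * (1 + ∑ j, κ j ^ 2) := by
    rw [Matrix.det_fromBlocks₁₁, Matrix.invOf_eq_nonsing_inv, hdet, Matrix.det_unique]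
    have : ((-1 : Matrix Unit Unit ℝ) - Matrix.replicateRow Unit κ * M⁻¹ * Matrix.replicateCol Unit v)
        default default = -(1 + ∑ j, κ j ^ 2) := by
      simp only [Matrix.sub_apply, Matrix.neg_apply, Matrix.one_apply_eq,
        Matrix.mul_apply, Matrix.replicateRow_apply, Matrix.replicateCol_apply]
      have : ∑ j, (∑ k, κ k * M⁻¹ k j) * v j = ∑ j, κ j ^ 2 := by
        simp only [Finset.sum_mul]
        rw [Finset.sum_comm]
        refine Finset.sum_congr rfl fun k _ => ?_
        have hκk : κ k = ∑ j, M⁻¹ k j * v j := rfl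
        calc ∑ j, κ k * M⁻¹ k j * v j = κ k * ∑ j, M⁻¹ k j * v j := by
              rw [Finset.mul_sum]; simp [mul_assoc]
          _ = κ k ^ 2 := by rw [← hκk, sq]
      rw [this]; ring
    rw [this]; ring
  refine ⟨hunit, hbig, ?_⟩
  rw [hbig]
  have h1 : (0:ℝ) < 1 + ∑ j, κ j ^ 2 := by positivity
  nlinarith
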